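/- Let θ_x, θ_y, θ_z be real numbers with 0 < θ_w < 2π/n for each w ∈ {x,y,z}, and set E_w = (1/√3)·exp(i θ_w J_w), where exp denotes the matrix exponential. Then a matrix ρ ∈ M_{2ⁿ}(ℂ) satisfies E_x ρ E_x† + E_y ρ E_y† + E_z ρ E_z† = ρ if and only if ρ commutes with each of J_x, J_y, J_z; that is, Fix(ℰ_n) = 𝒜_n′ = {J_x, J_y, J_z}′. -/

import Mathlib

open Matrix Complex

/-- Spin-1/2 Pauli matrix σ_x. -/
noncomputable def pauliX : Matrix (Fin 2) (Fin 2) ℂ := (1/2 : ℂ) • !![0, 1; 1, 0]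

/-- Spin-1/2 Pauli matrix σ_y. -/
noncomputable def pauliY : Matrix (Fin 2) (Fin 2) ℂ :=
  (1/2 : ℂ) • !![0, -Complex.I; Complex.I, 0]

/-- Spin-1/2 Pauli matrix σ_z. -/
noncomputable def pauliZ : Matrix (Fin 2) (Fin 2) ℂ := (1/2 : ℂ) • !![1, 0; 0, -1]

/-- The operator `1⊗⋯⊗1⊗σ⊗1⊗⋯⊗1` acting as `σ` in the `k`-th tensor slot of
`(ℂ²)^{⊗n}` and as the identity elsewhere, written as a matrix indexed by the
standard tensor-product basis `Fin n → Fin 2`. -/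
noncomputable def slot (n : ℕ) (σ : Matrix (Fin 2) (Fin 2) ℂ) (k : Fin n) :
    Matrix (Fin n → Fin 2) (Fin n → Fin 2) ℂ :=
  Matrix.of fun i j => σ (i k) (j k) * ∏ l ∈ Finset.univ.erase k, (if i l = j l then (1:ℂ) else 0)

/-- Collective rotation generator `J_x = Σ_k J_x^{(k)}`. -/
noncomputable def Jx (n : ℕ) : Matrix (Fin n → Fin 2) (Fin n → Fin 2) ℂ :=
  ∑ k : Fin n, slot n pauliX k

/-- Collective rotation generator `J_y = Σ_k J_y^{(k)}`. -/
noncomputable def Jy (n : ℕ) : Matrix (Fin n → Fin 2) (Fin n → Fin 2) ℂ :=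
  ∑ k : Fin n, slot n pauliY k

/-- Collective rotation generator `J_z = Σ_k J_z^{(k)}`. -/
noncomputable def Jz (n : ℕ) : Matrix (Fin n → Fin 2) (Fin n → Fin 2) ℂ :=
  ∑ k : Fin n, slot n pauliZ k

/-- `J_+ = J_x + i J_y`. -/
noncomputable def Jp (n : ℕ) : Matrix (Fin n → Fin 2) (Fin n → Fin 2) ℂ :=
  Jx n + Complex.I • Jy n

/-- `J_- = J_x - i J_y`. -/
noncomputable def Jm (n : ℕ) : Matrix (Fin n → Fin 2) (Fin n → Fin 2) ℂ :=
  Jx n - Complex.I • Jy n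

/-- The J-total operator `J² = J_x² + J_y² + J_z²`. -/
noncomputable def Jsq (n : ℕ) : Matrix (Fin n → Fin 2) (Fin n → Fin 2) ℂ :=
  Jx n ^ 2 + Jy n ^ 2 + Jz n ^ 2

/-! ### Auxiliary definitions and lemmas -/

/-- Kronecker product of `n` 2×2 matrices. -/
noncomputable def kronN (n : ℕ) (M : Fin n → Matrix (Fin 2) (Fin 2) ℂ) :
    Matrix (Fin n → Fin 2) (Fin n → Fin 2) ℂ :=
  Matrix.of fun i j => ∏ l, M l (i l) (j l)

lemma kronN_mul (n : ℕ) (M N : Fin n → Matrix (Fin 2) (Fin 2) ℂ) :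
    kronN n M * kronN n N = kronN n (fun l => M l * N l) := by
  ext i j
  simp only [kronN, Matrix.mul_apply, Matrix.of_apply]
  simp_rw [← Finset.prod_mul_distrib]
  rw [Finset.prod_univ_sum, Fintype.piFinset_univ]

lemma kronN_one (n : ℕ) : kronN n (fun _ => 1) = 1 := by
  ext i j
  simp only [kronN, Matrix.of_apply, Matrix.one_apply]
  by_cases h : i = j
  · subst h; simp
  · rw [if_neg h]
    obtain ⟨l, hl⟩ := Function.ne_iff.mp h
    exact Finset.prod_eq_zero (Finset.mem_univ l) (if_neg hl)

lemma slot_eq_kronN (n : ℕ) (σ : Matrix (Fin 2) (Fin 2) ℂ) (k : Fin n) :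
    slot n σ k = kronN n (fun l => if l = k then σ else 1) := by
  ext i j
  simp only [slot, kronN, Matrix.of_apply]
  rw [← Finset.mul_prod_erase Finset.univ _ (Finset.mem_univ k)]
  simp only [if_pos rfl]
  congr 1
  apply Finset.prod_congr rfl
  intro l hl
  rw [if_neg (Finset.mem_erase.mp hl).1, Matrix.one_apply]

lemma slot_conjTranspose (n : ℕ) (σ : Matrix (Fin 2) (Fin 2) ℂ) (k : Fin n) :
    (slot n σ k)ᴴ = slot n σᴴ k := by
  ext i j
  show star (σ (j k) (i k) * ∏ l ∈ Finset.univ.erase k, (if j l = i l then (1:ℂ) else 0))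
      = σᴴ (i k) (j k) * ∏ l ∈ Finset.univ.erase k, (if i l = j l then (1:ℂ) else 0)
  rw [star_mul']
  have hp : (∏ l ∈ Finset.univ.erase k, if j l = i l then (1:ℂ) else 0)
      = ∏ l ∈ Finset.univ.erase k, if i l = j l then (1:ℂ) else 0 := by
    apply Finset.prod_congr rfl; intro l _; simp [eq_comm]
  rw [hp]
  have : star (∏ l ∈ Finset.univ.erase k, if i l = j l then (1:ℂ) else 0)
      = ∏ l ∈ Finset.univ.erase k, if i l = j l then (1:ℂ) else 0 := by
    rw [star_prod]
    apply Finset.prod_congr rfl; intro l _; split_ifs <;> simp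
  rw [this, Matrix.conjTranspose_apply, mul_comm]

lemma pauliX_herm : pauliXᴴ = pauliX := by
  ext i j; fin_cases i <;> fin_cases j <;> simp [pauliX]
lemma pauliY_herm : pauliYᴴ = pauliY := by
  ext i j; fin_cases i <;> fin_cases j <;> simp [pauliY]
lemma pauliZ_herm : pauliZᴴ = pauliZ := by
  ext i j; fin_cases i <;> fin_cases j <;> simp [pauliZ]

lemma Jx_herm (n : ℕ) : (Jx n)ᴴ = Jx n := by
  simp [Jx, Matrix.conjTranspose_sum, slot_conjTranspose, pauliX_herm]
lemma Jy_herm (n : ℕ) : (Jy n)ᴴ = Jy n := by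
  simp [Jy, Matrix.conjTranspose_sum, slot_conjTranspose, pauliY_herm]
lemma Jz_herm (n : ℕ) : (Jz n)ᴴ = Jz n := by
  simp [Jz, Matrix.conjTranspose_sum, slot_conjTranspose, pauliZ_herm]

/-! ### 2×2 diagonalization data -/

noncomputable def Vx : Matrix (Fin 2) (Fin 2) ℂ := !![1, 1; 1, -1]
noncomputable def Vx' : Matrix (Fin 2) (Fin 2) ℂ := (1/2 : ℂ) • !![1, 1; 1, -1]
noncomputable def Vy : Matrix (Fin 2) (Fin 2) ℂ := !![1, 1; Complex.I, -Complex.I]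
noncomputable def Vy' : Matrix (Fin 2) (Fin 2) ℂ := (1/2 : ℂ) • !![1, -Complex.I; 1, Complex.I]

lemma Vx_mul_Vx' : Vx * Vx' = 1 := by
  ext i j; fin_cases i <;> fin_cases j <;>
    simp [Vx, Vx', Matrix.mul_apply, Fin.sum_univ_two, Matrix.one_apply] <;> norm_num

lemma hVx : pauliX = Vx * pauliZ * Vx' := by
  ext i j; fin_cases i <;> fin_cases j <;>
    simp [pauliX, pauliZ, Vx, Vx', Matrix.mul_apply, Fin.sum_univ_two] <;> norm_num

lemma Vy_mul_Vy' : Vy * Vy' = 1 := by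
  ext i j; fin_cases i <;> fin_cases j <;>
    simp [Vy, Vy', Matrix.mul_apply, Fin.sum_univ_two, Matrix.one_apply, Complex.I_mul_I] <;>
    ring_nf <;> simp [Complex.I_sq] <;> ring

lemma hVy : pauliY = Vy * pauliZ * Vy' := by
  ext i j; fin_cases i <;> fin_cases j <;>
    simp [pauliY, pauliZ, Vy, Vy', Matrix.mul_apply, Fin.sum_univ_two] <;>
    ring_nf <;> simp [Complex.I_sq] <;> ring

/-! ### Diagonal form of Jz -/

noncomputable def dvec (n : ℕ) (i : Fin n → Fin 2) : ℂ := ∑ k, pauliZ (i k) (i k)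

lemma pauliZ_diag (a : Fin 2) : pauliZ a a = 1/2 - (a : ℕ) := by
  fin_cases a <;> norm_num [pauliZ]

lemma pauliZ_offdiag {a b : Fin 2} (h : a ≠ b) : pauliZ a b = 0 := by
  fin_cases a <;> fin_cases b <;> simp_all [pauliZ]

lemma Jz_diag (n : ℕ) : Jz n = Matrix.diagonal (dvec n) := by
  ext i j
  simp only [Jz, Matrix.sum_apply, slot, Matrix.of_apply, Matrix.diagonal_apply]
  by_cases h : i = j
  · subst h; simp [dvec]
  · rw [if_neg h]
    apply Finset.sum_eq_zero
    intro k _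
    obtain ⟨l, hl⟩ := Function.ne_iff.mp h
    by_cases hlk : l = k
    · subst hlk; rw [pauliZ_offdiag hl, zero_mul]
    · rw [Finset.prod_eq_zero (Finset.mem_erase.mpr ⟨hlk, Finset.mem_univ l⟩)
        (if_neg hl : (if i l = j l then (1:ℂ) else 0) = 0), mul_zero]

lemma dvec_eq (n : ℕ) (i : Fin n → Fin 2) :
    dvec n i = (n : ℂ)/2 - ((∑ k, ((i k : ℕ)) : ℕ) : ℂ) := by
  simp only [dvec, pauliZ_diag]
  push_cast
  rw [Finset.sum_sub_distrib]
  simp [Finset.card_univ]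
  ring

lemma sum_le (n : ℕ) (i : Fin n → Fin 2) : (∑ k, ((i k : ℕ))) ≤ n := by
  calc (∑ k, ((i k : ℕ))) ≤ ∑ _k : Fin n, 1 :=
        Finset.sum_le_sum (fun k _ => Nat.lt_succ_iff.mp (i k).isLt)
    _ = n := by simp

lemma dvec_inj (n : ℕ) (hn : 1 ≤ n) (θ : ℝ) (hθ1 : 0 < θ) (hθ2 : θ < 2 * Real.pi / n)
    (i j : Fin n → Fin 2)
    (h : Complex.exp (Complex.I * θ * dvec n i) = Complex.exp (Complex.I * θ * dvec n j)) :
    dvec n i = dvec n j := by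
  obtain ⟨m, hm⟩ := Complex.exp_eq_exp_iff_exists_int.mp h
  set a : ℕ := ∑ k, ((i k : ℕ)) with ha
  set b0 : ℕ := ∑ k, ((j k : ℕ)) with hb
  have hd : dvec n i - dvec n j = ((b0 : ℤ) - a : ℤ) := by
    rw [dvec_eq, dvec_eq, ← ha, ← hb]; push_cast; ring
  set t : ℤ := (b0 : ℤ) - a with ht
  have key : Complex.I * (θ * t) = Complex.I * (m * (2 * Real.pi)) := by
    have h' : Complex.I * θ * dvec n i - Complex.I * θ * dvec n j
        = m * (2 * Real.pi * Complex.I) := by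
      rw [hm]; ring
    rw [← mul_sub, mul_assoc] at h'
    rw [hd] at h'
    push_cast at h' ⊢
    linear_combination h'
  have key2 : θ * (t : ℝ) = (m : ℝ) * (2 * Real.pi) := by
    have := mul_left_cancel₀ Complex.I_ne_zero key
    exact_mod_cast this
  have hπ : 0 < Real.pi := Real.pi_pos
  have htn : |(t : ℝ)| ≤ n := by
    rw [ht]
    push_cast
    rw [abs_le]
    constructor
    · have : (a : ℝ) ≤ n := by exact_mod_cast sum_le n i
      have hb0 : (0:ℝ) ≤ b0 := by positivity
      linarith
    · have : (b0 : ℝ) ≤ n := by exact_mod_cast sum_le n j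
      have ha0 : (0:ℝ) ≤ a := by positivity
      linarith
  have hn' : (0:ℝ) < n := by exact_mod_cast hn
  have hθn : θ * n < 2 * Real.pi := by
    calc θ * n < 2 * Real.pi / n * n := mul_lt_mul_of_pos_right hθ2 hn'
      _ = 2 * Real.pi := by field_simp
  have hm0 : m = 0 := by
    by_contra hm0
    have h1le : (1:ℝ) ≤ |(m:ℝ)| := by exact_mod_cast Int.one_le_abs (by exact_mod_cast hm0)
    have h1 : |θ * t| = |(m:ℝ)| * (2 * Real.pi) := by
      rw [key2, abs_mul, abs_of_pos Real.two_pi_pos]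
    have h2 : |θ * t| ≤ θ * n := by
      rw [abs_mul, abs_of_pos hθ1]
      exact mul_le_mul_of_nonneg_left htn (le_of_lt hθ1)
    nlinarith
  have ht0 : (t : ℝ) = 0 := by
    rw [hm0] at key2; push_cast at key2
    rcases mul_eq_zero.mp (by linarith [key2] : θ * (t:ℝ) = 0) with h' | h'
    · exact absurd h' (ne_of_gt hθ1)
    · exact h'
  have hfin : dvec n i - dvec n j = 0 := by rw [hd]; exact_mod_cast ht0
  exact sub_eq_zero.mp hfin

/-! ### Representation of the generators as conjugated diagonals -/

lemma conj_slot (n : ℕ) (V V' σ : Matrix (Fin 2) (Fin 2) ℂ) (hVV' : V * V' = 1) (k : Fin n) :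
    kronN n (fun _ => V) * slot n σ k * kronN n (fun _ => V')
      = slot n (V * σ * V') k := by
  rw [slot_eq_kronN, slot_eq_kronN, kronN_mul, kronN_mul]
  apply congrArg (kronN n)
  funext l
  by_cases h : l = k
  · simp [h]
  · simp [h, hVV']

lemma rep_of_pauli (n : ℕ) (V V' σ : Matrix (Fin 2) (Fin 2) ℂ) (hVV' : V * V' = 1)
    (hσ : σ = V * pauliZ * V') :
    (∑ k : Fin n, slot n σ k)
      = kronN n (fun _ => V) * Matrix.diagonal (dvec n) * kronN n (fun _ => V')
      ∧ kronN n (fun _ => V) * kronN n (fun _ => V') = 1 := by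
  have hK : kronN n (fun _ => V) * kronN n (fun _ => V') = 1 := by
    rw [kronN_mul]
    simp only [hVV']
    exact kronN_one n
  refine ⟨?_, hK⟩
  rw [← Jz_diag, Jz, Finset.mul_sum, Finset.sum_mul]
  apply Finset.sum_congr rfl
  intro k _
  rw [conj_slot n V V' pauliZ hVV' k, ← hσ]

/-! ### Matrix exponential helpers -/

section ExpHelpers

variable {m : Type*} [Fintype m] [DecidableEq m]

lemma exp_conj_diag (W W' : Matrix m m ℂ) (h1 : W * W' = 1) (c : ℂ) (d : m → ℂ) :
    NormedSpace.exp (c • (W * Matrix.diagonal d * W')) =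
      W * Matrix.diagonal (fun i => Complex.exp (c * d i)) * W' := by
  have hW : IsUnit W := (Matrix.isUnit_iff_isUnit_det W).mpr (Matrix.isUnit_det_of_right_inverse h1)
  have hinv : W⁻¹ = W' := Matrix.inv_eq_right_inv h1
  have hd : Matrix.diagonal (fun i => c * d i) = c • Matrix.diagonal d := by
    rw [← Matrix.diagonal_smul]; rfl
  have e1 : W * Matrix.diagonal (fun i => c * d i) * W⁻¹ = c • (W * Matrix.diagonal d * W') := by
    rw [hinv, hd, Matrix.mul_smul, Matrix.smul_mul]
  rw [← e1, Matrix.exp_conj W _ hW, Matrix.exp_diagonal, Pi.exp_def, hinv]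
  simp_rw [Complex.exp_eq_exp_ℂ]

lemma exp_unitary (A : Matrix m m ℂ) (hA : Aᴴ = A) (θ : ℝ) :
    NormedSpace.exp ((Complex.I * θ) • A) * (NormedSpace.exp ((Complex.I * θ) • A))ᴴ = 1 ∧
    (NormedSpace.exp ((Complex.I * θ) • A))ᴴ * NormedSpace.exp ((Complex.I * θ) • A) = 1 := by
  have hct : (NormedSpace.exp ((Complex.I * θ) • A))ᴴ
      = NormedSpace.exp (-((Complex.I * θ) • A)) := by
    rw [← Matrix.exp_conjTranspose]
    congr 1
    rw [Matrix.conjTranspose_smul, hA, ← neg_smul]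
    congr 1
    simp [Complex.ext_iff]
  constructor
  · have h := Matrix.exp_add_of_commute ((Complex.I * (θ:ℂ)) • A)
      (-((Complex.I * (θ:ℂ)) • A)) (Commute.neg_right (Commute.refl _))
    rw [add_neg_cancel, NormedSpace.exp_zero] at h
    rw [hct, ← h]
  · have h := Matrix.exp_add_of_commute (-((Complex.I * (θ:ℂ)) • A))
      ((Complex.I * (θ:ℂ)) • A) (Commute.neg_left (Commute.refl _))
    rw [neg_add_cancel, NormedSpace.exp_zero] at h
    rw [hct, ← h]

lemma comm_diag_of_comm_expdiag (d e : m → ℂ) (hinj : ∀ i j, e i = e j → d i = d j)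
    (σ : Matrix m m ℂ) (h : σ * Matrix.diagonal e = Matrix.diagonal e * σ) :
    σ * Matrix.diagonal d = Matrix.diagonal d * σ := by
  ext i j
  have h' := congrFun (congrFun h i) j
  rw [Matrix.mul_diagonal, Matrix.diagonal_mul] at h' ⊢
  by_cases hσ : σ i j = 0
  · rw [hσ]; ring
  · have he : e j = e i := mul_left_cancel₀ hσ (by rw [h']; ring)
    rw [hinj j i he]; ring

/-! ### Averaging rigidity -/

lemma trace_conjTranspose_mul_self (B : Matrix m m ℂ) :
    Matrix.trace (Bᴴ * B) = ((∑ i, ∑ j, Complex.normSq (B j i) : ℝ) : ℂ) := by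
  simp only [Matrix.trace, Matrix.diag, Matrix.mul_apply, Matrix.conjTranspose_apply]
  push_cast
  simp [Complex.normSq_eq_conj_mul_self, Complex.star_def]

lemma eq_zero_of_trace_eq_zero (B : Matrix m m ℂ) (h : Matrix.trace (Bᴴ * B) = 0) : B = 0 := by
  rw [trace_conjTranspose_mul_self] at h
  have h' : (∑ i, ∑ j, Complex.normSq (B j i) : ℝ) = 0 := by exact_mod_cast h
  ext i j
  have h1 := (Finset.sum_eq_zero_iff_of_nonneg (fun k _ =>
    Finset.sum_nonneg (fun l _ => Complex.normSq_nonneg _))).mp h' j (Finset.mem_univ j)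
  have h2 := (Finset.sum_eq_zero_iff_of_nonneg (fun l _ =>
    Complex.normSq_nonneg _)).mp h1 i (Finset.mem_univ i)
  simpa using Complex.normSq_eq_zero.mp h2

lemma avg_rigidity (Ux Uy Uz ρ : Matrix m m ℂ)
    (hx : Uxᴴ * Ux = 1) (hy : Uyᴴ * Uy = 1) (hz : Uzᴴ * Uz = 1)
    (h : Ux * ρ * Uxᴴ + Uy * ρ * Uyᴴ + Uz * ρ * Uzᴴ = (3:ℂ) • ρ) :
    Ux * ρ * Uxᴴ = ρ ∧ Uy * ρ * Uyᴴ = ρ ∧ Uz * ρ * Uzᴴ = ρ := by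
  set T := Matrix.trace (ρᴴ * ρ) with hT
  have hAA : ∀ U : Matrix m m ℂ, Uᴴ * U = 1 →
      Matrix.trace ((U * ρ * Uᴴ)ᴴ * (U * ρ * Uᴴ)) = T := by
    intro U hU
    have hc : (U * ρ * Uᴴ)ᴴ * (U * ρ * Uᴴ) = U * (ρᴴ * ρ) * Uᴴ := by
      simp only [Matrix.conjTranspose_mul, Matrix.conjTranspose_conjTranspose]
      calc U * (ρᴴ * Uᴴ) * (U * ρ * Uᴴ) = U * (ρᴴ * ((Uᴴ * U) * ρ)) * Uᴴ := by
            noncomm_ring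
        _ = U * (ρᴴ * ρ) * Uᴴ := by rw [hU, Matrix.one_mul]
    rw [hc, Matrix.trace_mul_comm, ← Matrix.mul_assoc, hU, Matrix.one_mul]
  have expand : ∀ A : Matrix m m ℂ,
      Matrix.trace ((A - ρ)ᴴ * (A - ρ)) =
        Matrix.trace (Aᴴ * A) - Matrix.trace (Aᴴ * ρ) - Matrix.trace (ρᴴ * A) + T := by
    intro A
    simp only [Matrix.conjTranspose_sub, Matrix.sub_mul, Matrix.mul_sub, Matrix.trace_sub]
    ring
  have hsumA : trace ((Ux * ρ * Uxᴴ)ᴴ * ρ) + trace ((Uy * ρ * Uyᴴ)ᴴ * ρ)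
      + trace ((Uz * ρ * Uzᴴ)ᴴ * ρ) = 3 * T := by
    rw [← Matrix.trace_add, ← Matrix.trace_add, ← Matrix.add_mul, ← Matrix.add_mul,
      ← Matrix.conjTranspose_add, ← Matrix.conjTranspose_add, h]
    rw [Matrix.conjTranspose_smul, Matrix.smul_mul, Matrix.trace_smul]
    simp [hT, smul_eq_mul]
  have hsumB : trace (ρᴴ * (Ux * ρ * Uxᴴ)) + trace (ρᴴ * (Uy * ρ * Uyᴴ))
      + trace (ρᴴ * (Uz * ρ * Uzᴴ)) = 3 * T := by
    rw [← Matrix.trace_add, ← Matrix.trace_add, ← Matrix.mul_add, ← Matrix.mul_add, h]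
    rw [Matrix.mul_smul, Matrix.trace_smul]
    simp [hT, smul_eq_mul]
  have hzero : trace ((Ux * ρ * Uxᴴ - ρ)ᴴ * (Ux * ρ * Uxᴴ - ρ))
      + trace ((Uy * ρ * Uyᴴ - ρ)ᴴ * (Uy * ρ * Uyᴴ - ρ))
      + trace ((Uz * ρ * Uzᴴ - ρ)ᴴ * (Uz * ρ * Uzᴴ - ρ)) = 0 := by
    rw [expand, expand, expand, hAA Ux hx, hAA Uy hy, hAA Uz hz]
    linear_combination -hsumA - hsumB
  have hre : ∀ B : Matrix m m ℂ, ∃ r : ℝ, 0 ≤ r ∧ trace (Bᴴ * B) = (r : ℂ) := by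
    intro B
    exact ⟨_, Finset.sum_nonneg (fun i _ => Finset.sum_nonneg fun j _ => Complex.normSq_nonneg _),
      trace_conjTranspose_mul_self B⟩
  obtain ⟨r1, hr1, e1⟩ := hre (Ux * ρ * Uxᴴ - ρ)
  obtain ⟨r2, hr2, e2⟩ := hre (Uy * ρ * Uyᴴ - ρ)
  obtain ⟨r3, hr3, e3⟩ := hre (Uz * ρ * Uzᴴ - ρ)
  rw [e1, e2, e3] at hzero
  have hsum : r1 + r2 + r3 = 0 := by exact_mod_cast hzero
  have h1 : r1 = 0 := by linarith
  have h2 : r2 = 0 := by linarith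
  have h3 : r3 = 0 := by linarith
  refine ⟨?_, ?_, ?_⟩
  · have := eq_zero_of_trace_eq_zero _ (by rw [e1, h1]; norm_num)
    rwa [sub_eq_zero] at this
  · have := eq_zero_of_trace_eq_zero _ (by rw [e2, h2]; norm_num)
    rwa [sub_eq_zero] at this
  · have := eq_zero_of_trace_eq_zero _ (by rw [e3, h3]; norm_num)
    rwa [sub_eq_zero] at this

end ExpHelpers

/-! ### The key per-generator lemma -/

lemma gen_key (n : ℕ) (hn : 1 ≤ n) (θ : ℝ) (hθ1 : 0 < θ) (hθ2 : θ < 2 * Real.pi / n)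
    (J W W' : Matrix (Fin n → Fin 2) (Fin n → Fin 2) ℂ)
    (h1 : W * W' = 1) (hrep : J = W * Matrix.diagonal (dvec n) * W')
    (ρ : Matrix (Fin n → Fin 2) (Fin n → Fin 2) ℂ)
    (hcomm : ρ * NormedSpace.exp ((Complex.I * θ) • J)
      = NormedSpace.exp ((Complex.I * θ) • J) * ρ) :
    ρ * J = J * ρ := by
  have h2 : W' * W = 1 := mul_eq_one_comm.mp h1
  have hexp : NormedSpace.exp ((Complex.I * θ) • J)
      = W * Matrix.diagonal (fun i => Complex.exp (Complex.I * θ * dvec n i)) * W' := by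
    rw [hrep]; exact exp_conj_diag W W' h1 _ _
  set E := Matrix.diagonal (fun i => Complex.exp (Complex.I * θ * dvec n i)) with hE
  have hσ : (W' * ρ * W) * E = E * (W' * ρ * W) := by
    have h' := hcomm
    rw [hexp] at h'
    have hc := congrArg (fun X => W' * X * W) h'
    simp only [← Matrix.mul_assoc] at hc
    -- hc : W' * ρ * W * E * W' * W = W' * W * E * W' * ρ * W
    rw [Matrix.mul_assoc (W' * ρ * W * E) W' W, h2, Matrix.mul_one, Matrix.one_mul] at hc
    simp only [← Matrix.mul_assoc] at hc ⊢
    exact hc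
  have hσD : (W' * ρ * W) * Matrix.diagonal (dvec n)
      = Matrix.diagonal (dvec n) * (W' * ρ * W) :=
    comm_diag_of_comm_expdiag (dvec n) _ (dvec_inj n hn θ hθ1 hθ2) _ hσ
  have step1 : ρ * J = W * ((W' * ρ * W) * Matrix.diagonal (dvec n)) * W' := by
    rw [hrep]
    simp only [← Matrix.mul_assoc]
    rw [show W * W' * ρ * W * Matrix.diagonal (dvec n) * W'
      = (W * W') * (ρ * W * Matrix.diagonal (dvec n) * W') from by simp only [Matrix.mul_assoc],
      h1, Matrix.one_mul]
  have step2 : J * ρ = W * (Matrix.diagonal (dvec n) * (W' * ρ * W)) * W' := by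
    rw [hrep]
    simp only [← Matrix.mul_assoc]
    rw [Matrix.mul_assoc (W * Matrix.diagonal (dvec n) * W' * ρ) W W', h1, Matrix.mul_one]
  rw [step1, step2, hσD]

set_option maxHeartbeats 1000000 in
/-- `Fix(ℰ_n) = 𝒜_n′ = {J_x, J_y, J_z}′`: for angles `0 < θ_w < 2π/n`, a matrix `ρ` is a
fixed point of the collective rotation channel `ℰ_n(ρ) = E_x ρ E_x† + E_y ρ E_y† + E_z ρ E_z†`,
with `E_w = (1/√3)·exp(i θ_w J_w)`, if and only if `ρ` commutes with each of `J_x, J_y, J_z`. -/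
theorem fixed_points_eq_commutant (n : ℕ) (hn : 1 ≤ n)
    (θx θy θz : ℝ)
    (hθx : 0 < θx ∧ θx < 2 * Real.pi / n)
    (hθy : 0 < θy ∧ θy < 2 * Real.pi / n)
    (hθz : 0 < θz ∧ θz < 2 * Real.pi / n)
    (ρ : Matrix (Fin n → Fin 2) (Fin n → Fin 2) ℂ) :
    letI Ex := ((Real.sqrt 3 : ℂ))⁻¹ • NormedSpace.exp ((Complex.I * θx) • Jx n)
    letI Ey := ((Real.sqrt 3 : ℂ))⁻¹ • NormedSpace.exp ((Complex.I * θy) • Jy n)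
    letI Ez := ((Real.sqrt 3 : ℂ))⁻¹ • NormedSpace.exp ((Complex.I * θz) • Jz n)
    (Ex * ρ * Exᴴ + Ey * ρ * Eyᴴ + Ez * ρ * Ezᴴ = ρ ↔
      ρ * Jx n = Jx n * ρ ∧ ρ * Jy n = Jy n * ρ ∧ ρ * Jz n = Jz n * ρ) := by
  obtain ⟨hθx1, hθx2⟩ := hθx
  obtain ⟨hθy1, hθy2⟩ := hθy
  obtain ⟨hθz1, hθz2⟩ := hθz
  set c : ℂ := ((Real.sqrt 3 : ℂ))⁻¹ with hc
  set Ux := NormedSpace.exp ((Complex.I * (θx:ℂ)) • Jx n) with hUxdef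
  set Uy := NormedSpace.exp ((Complex.I * (θy:ℂ)) • Jy n) with hUydef
  set Uz := NormedSpace.exp ((Complex.I * (θz:ℂ)) • Jz n) with hUzdef
  -- unitarity
  obtain ⟨hu1x, hu2x⟩ := exp_unitary (Jx n) (Jx_herm n) θx
  obtain ⟨hu1y, hu2y⟩ := exp_unitary (Jy n) (Jy_herm n) θy
  obtain ⟨hu1z, hu2z⟩ := exp_unitary (Jz n) (Jz_herm n) θz
  -- scalar facts
  have hstarc : star c = c := by
    rw [hc, star_inv₀]
    congr 1
    exact Complex.conj_ofReal _
  have hcc : c * c = (3:ℂ)⁻¹ := by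
    rw [hc, ← mul_inv]
    congr 1
    rw [← Complex.ofReal_mul, Real.mul_self_sqrt (by norm_num : (0:ℝ) ≤ 3)]
    norm_num
  -- channel terms
  have hterm : ∀ U : Matrix (Fin n → Fin 2) (Fin n → Fin 2) ℂ,
      (c • U) * ρ * (c • U)ᴴ = (3:ℂ)⁻¹ • (U * ρ * Uᴴ) := by
    intro U
    rw [Matrix.conjTranspose_smul, hstarc, Matrix.smul_mul, Matrix.smul_mul, Matrix.mul_smul,
      smul_smul, hcc]
  -- representations
  obtain ⟨hrepx, hWx⟩ := rep_of_pauli n Vx Vx' pauliX Vx_mul_Vx' hVx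
  obtain ⟨hrepy, hWy⟩ := rep_of_pauli n Vy Vy' pauliY Vy_mul_Vy' hVy
  have hrepz : Jz n = 1 * Matrix.diagonal (dvec n) * 1 := by
    rw [Jz_diag, Matrix.one_mul, Matrix.mul_one]
  constructor
  · intro hfix
    rw [hterm Ux, hterm Uy, hterm Uz] at hfix
    have h3 : Ux * ρ * Uxᴴ + Uy * ρ * Uyᴴ + Uz * ρ * Uzᴴ = (3:ℂ) • ρ := by
      have := congrArg (fun X => (3:ℂ) • X) hfix
      simp only [smul_add, smul_smul] at this
      rw [mul_inv_cancel₀ (by norm_num : (3:ℂ) ≠ 0), one_smul, one_smul, one_smul] at this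
      exact this
    obtain ⟨fx, fy, fz⟩ := avg_rigidity Ux Uy Uz ρ hu2x hu2y hu2z h3
    have mkc : ∀ (U : Matrix (Fin n → Fin 2) (Fin n → Fin 2) ℂ),
        Uᴴ * U = 1 → U * ρ * Uᴴ = ρ → ρ * U = U * ρ := by
      intro U hU f
      have := congrArg (fun X => X * U) f
      rw [Matrix.mul_assoc (U * ρ) Uᴴ U, hU, Matrix.mul_one] at this
      exact this.symm
    exact ⟨gen_key n hn θx hθx1 hθx2 (Jx n) _ _ hWx hrepx ρ (mkc Ux hu2x fx),
      gen_key n hn θy hθy1 hθy2 (Jy n) _ _ hWy hrepy ρ (mkc Uy hu2y fy),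
      gen_key n hn θz hθz1 hθz2 (Jz n) 1 1 (by rw [Matrix.one_mul]) hrepz ρ (mkc Uz hu2z fz)⟩
  · rintro ⟨c1, c2, c3⟩
    have hcomm : ∀ (J : Matrix (Fin n → Fin 2) (Fin n → Fin 2) ℂ) (θ : ℝ),
        ρ * J = J * ρ → ρ * NormedSpace.exp ((Complex.I * θ) • J)
          = NormedSpace.exp ((Complex.I * θ) • J) * ρ := by
      intro J θ hJ
      exact ((Commute.smul_right (hJ : Commute ρ J) (Complex.I * θ)).exp_right)
    have keyterm : ∀ (U : Matrix (Fin n → Fin 2) (Fin n → Fin 2) ℂ),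
        U * Uᴴ = 1 → ρ * U = U * ρ → U * ρ * Uᴴ = ρ := by
      intro U hU hcm
      rw [← hcm, Matrix.mul_assoc, hU, Matrix.mul_one]
    rw [hterm Ux, hterm Uy, hterm Uz,
      keyterm Ux hu1x (hcomm (Jx n) θx c1), keyterm Uy hu1y (hcomm (Jy n) θy c2),
      keyterm Uz hu1z (hcomm (Jz n) θz c3), ← smul_add, ← smul_add]
    module
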